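/- If f is (C, α)-multiaccurate with X ∈ C, then for every set S ∈ C and every position k, |E_{x⃗∼D^n, i∼Unif[n]}[1_{x_i∈S}·(Pr_{r_UA(f*(x⃗))}[i at rank k] − Pr_{r_UA(f(x⃗))}[i at rank k])]| ≤ L·n·α. -/

import Mathlib

open Finset

/-- An `n × L` matrix is row-stochastic (a prediction matrix) if every row is a
probability distribution over the `L` labels. Labels are ordered: a higher
index in `Fin L` is a better label. -/
def rowStochastic {n L : ℕ} (P : Fin n → Fin L → ℝ) : Prop :=
  (∀ i ℓ, 0 ≤ P i ℓ) ∧ ∀ i, ∑ ℓ, P i ℓ = 1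

/-- `N^{>ℓ}`: the number of individuals whose label is strictly better than `ℓ`
under the label assignment `lam`. -/
def nGT {n L : ℕ} (lam : Fin n → Fin L) (ℓ : Fin L) : ℕ :=
  (Finset.univ.filter fun j => ℓ < lam j).card

/-- `N^{=ℓ}`: the number of individuals whose label equals `ℓ`. -/
def nEQ {n L : ℕ} (lam : Fin n → Fin L) (ℓ : Fin L) : ℕ :=
  (Finset.univ.filter fun j => lam j = ℓ).card

/-- `N^{>ℓ}_{−i}`: the number of individuals other than `i` whose label is
strictly better than `ℓ`. -/
def nGTm {n L : ℕ} (lam : Fin n → Fin L) (i : Fin n) (ℓ : Fin L) : ℕ :=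
  ((Finset.univ.erase i).filter fun j => ℓ < lam j).card

/-- `N^{=ℓ}_{−i}`: the number of individuals other than `i` whose label equals
`ℓ`. -/
def nEQm {n L : ℕ} (lam : Fin n → Fin L) (i : Fin n) (ℓ : Fin L) : ℕ :=
  ((Finset.univ.erase i).filter fun j => lam j = ℓ).card

/-- Conditioned on the full label assignment `lam`, the probability that
individual `i` receives (0-indexed) rank `k` when individuals are sorted by
decreasing label with uniform tie-breaking: it is `1 / N^{=λᵢ}` if
`N^{>λᵢ} ≤ k < N^{>λᵢ} + N^{=λᵢ}` and `0` otherwise. -/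
noncomputable def condRank {n L : ℕ} (lam : Fin n → Fin L) (i k : Fin n) : ℝ :=
  if nGT lam (lam i) ≤ k.val ∧ k.val < nGT lam (lam i) + nEQ lam (lam i)
  then ((nEQ lam (lam i) : ℝ))⁻¹ else 0

/-- The uncertainty aware (UA) ranking function: `rUA P i k` is the probability
that individual `i` receives rank `k` when labels `λ_j ∼ P j` are drawn
independently and individuals are ranked by decreasing label with uniform
tie-breaking. -/
noncomputable def rUA {n L : ℕ} (P : Fin n → Fin L → ℝ) : Fin n → Fin n → ℝ :=
  fun i k => ∑ lam : Fin n → Fin L, (∏ j, P j (lam j)) * condRank lam i k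

/-- The probability, under the UA ranking for prediction matrix `P`, that
individual `i` receives rank `k`, conditioned on `λ_i = ℓ` (the labels of the
other individuals being drawn independently from the rows of `P`). -/
noncomputable def condProbGiven {n L : ℕ} (P : Fin n → Fin L → ℝ)
    (i k : Fin n) (ℓ : Fin L) : ℝ :=
  ∑ lam : Fin n → Fin L,
    if lam i = ℓ then (∏ j ∈ Finset.univ.erase i, P j (lam j)) * condRank lam i k
    else 0

open scoped Classical



section Tele
variable {n L : ℕ}

lemma tele_step (A B : Fin n → Fin L → ℝ)
    (hA0 : ∀ j ℓ, 0 ≤ A j ℓ) (hA1 : ∀ j, ∑ ℓ, A j ℓ ≤ 1)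
    (hB0 : ∀ j ℓ, 0 ≤ B j ℓ) (hB1 : ∀ j, ∑ ℓ, B j ℓ ≤ 1)
    (α : ℝ) (hα : 0 ≤ α) (hd : ∀ j ℓ, |A j ℓ - B j ℓ| ≤ α)
    (c : (Fin n → Fin L) → ℝ) (hc0 : ∀ lam, 0 ≤ c lam) (hc1 : ∀ lam, c lam ≤ 1)
    (a : Fin n) (s : Finset (Fin n)) (ha : a ∉ s) :
    |∑ lam : Fin n → Fin L,
        (∏ j, if j ∈ insert a s then A j (lam j) else B j (lam j)) * c lam -
      ∑ lam : Fin n → Fin L,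
        (∏ j, if j ∈ s then A j (lam j) else B j (lam j)) * c lam| ≤ L * α := by
  classical
  set R : Fin n → Fin L → ℝ := fun j ℓ => if j ∈ s then A j ℓ else B j ℓ with hR
  have hRdef : ∀ j ℓ, R j ℓ = if j ∈ s then A j ℓ else B j ℓ := fun j ℓ => rfl
  have hR0 : ∀ j ℓ, 0 ≤ R j ℓ := fun j ℓ => by
    rw [hRdef]; split <;> [exact hA0 j ℓ; exact hB0 j ℓ]
  have hR1 : ∀ j, ∑ ℓ, R j ℓ ≤ 1 := fun j => by
    simp only [hRdef]; split <;> [exact hA1 j; exact hB1 j]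
  rw [← Finset.sum_sub_distrib]
  have key : ∀ lam : Fin n → Fin L,
      (∏ j, if j ∈ insert a s then A j (lam j) else B j (lam j)) * c lam -
        (∏ j, R j (lam j)) * c lam
      = (A a (lam a) - B a (lam a)) * ((∏ j ∈ univ.erase a, R j (lam j)) * c lam) := by
    intro lam
    have h1 : (∏ j, if j ∈ insert a s then A j (lam j) else B j (lam j))
        = A a (lam a) * ∏ j ∈ univ.erase a, R j (lam j) := by
      rw [← Finset.mul_prod_erase univ _ (mem_univ a),
        if_pos (Finset.mem_insert_self a s)]
      congr 1
      apply Finset.prod_congr rfl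
      intro j hj
      have hja : j ≠ a := (Finset.mem_erase.mp hj).1
      rw [hRdef]
      by_cases hjs : j ∈ s
      · rw [if_pos (Finset.mem_insert_of_mem hjs), if_pos hjs]
      · rw [if_neg (by simp [hja, hjs]), if_neg hjs]
    have h2 : (∏ j, R j (lam j)) = B a (lam a) * ∏ j ∈ univ.erase a, R j (lam j) := by
      rw [← Finset.mul_prod_erase univ _ (mem_univ a), hRdef, if_neg ha]
    rw [h1, h2]; ring
  calc |∑ lam : Fin n → Fin L, _| = |∑ lam : Fin n → Fin L,
        (A a (lam a) - B a (lam a)) * ((∏ j ∈ univ.erase a, R j (lam j)) * c lam)| := by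
        congr 1; exact Finset.sum_congr rfl fun lam _ => key lam
    _ ≤ ∑ lam : Fin n → Fin L,
        |(A a (lam a) - B a (lam a)) * ((∏ j ∈ univ.erase a, R j (lam j)) * c lam)| :=
        Finset.abs_sum_le_sum_abs _ _
    _ ≤ ∑ lam : Fin n → Fin L, α * ((∏ j ∈ univ.erase a, R j (lam j)) * 1) := by
        apply Finset.sum_le_sum
        intro lam _
        rw [abs_mul]
        have hprod : 0 ≤ ∏ j ∈ univ.erase a, R j (lam j) :=
          Finset.prod_nonneg fun j _ => hR0 j _
        have habs : |(∏ j ∈ univ.erase a, R j (lam j)) * c lam|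
            = (∏ j ∈ univ.erase a, R j (lam j)) * c lam := by
          rw [abs_of_nonneg (mul_nonneg hprod (hc0 lam))]
        rw [habs]
        apply mul_le_mul (hd a _) (mul_le_mul_of_nonneg_left (hc1 lam) hprod)
          (mul_nonneg hprod (hc0 lam)) hα
    _ = α * ∑ lam : Fin n → Fin L, ∏ j, (if j = a then 1 else R j (lam j)) := by
        rw [Finset.mul_sum]
        apply Finset.sum_congr rfl
        intro lam _
        rw [mul_one]
        congr 1
        rw [← Finset.mul_prod_erase univ _ (mem_univ a), if_pos rfl, one_mul]
        apply Finset.prod_congr rfl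
        intro j hj
        rw [if_neg (Finset.mem_erase.mp hj).1]
    _ = α * ∏ j, ∑ ℓ, (if j = a then (1:ℝ) else R j ℓ) := by
        congr 1
        exact (Fintype.prod_sum fun j ℓ => if j = a then (1:ℝ) else R j ℓ).symm
    _ ≤ α * L := by
        apply mul_le_mul_of_nonneg_left _ hα
        rw [← Finset.mul_prod_erase univ _ (mem_univ a)]
        have e1 : (∑ ℓ : Fin L, if a = a then (1:ℝ) else R a ℓ) = L := by
          rw [Finset.sum_congr rfl fun ℓ _ => if_pos rfl]; simp
        have e2 : (∏ j ∈ univ.erase a, ∑ ℓ, (if j = a then (1:ℝ) else R j ℓ))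
            = ∏ j ∈ univ.erase a, ∑ ℓ, R j ℓ := by
          apply Finset.prod_congr rfl; intro j hj
          exact Finset.sum_congr rfl fun ℓ _ => if_neg (Finset.mem_erase.mp hj).1
        rw [e1, e2]
        calc (L:ℝ) * ∏ j ∈ univ.erase a, ∑ ℓ, R j ℓ ≤ (L:ℝ) * 1 := by
              apply mul_le_mul_of_nonneg_left _ (Nat.cast_nonneg L)
              exact Finset.prod_le_one (fun j _ => Finset.sum_nonneg fun ℓ _ => hR0 j ℓ)
                (fun j _ => hR1 j)
          _ = L := mul_one _
    _ = L * α := mul_comm _ _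

lemma tele (A B : Fin n → Fin L → ℝ)
    (hA0 : ∀ j ℓ, 0 ≤ A j ℓ) (hA1 : ∀ j, ∑ ℓ, A j ℓ ≤ 1)
    (hB0 : ∀ j ℓ, 0 ≤ B j ℓ) (hB1 : ∀ j, ∑ ℓ, B j ℓ ≤ 1)
    (α : ℝ) (hα : 0 ≤ α) (hd : ∀ j ℓ, |A j ℓ - B j ℓ| ≤ α)
    (c : (Fin n → Fin L) → ℝ) (hc0 : ∀ lam, 0 ≤ c lam) (hc1 : ∀ lam, c lam ≤ 1) :
    |∑ lam : Fin n → Fin L, (∏ j, A j (lam j)) * c lam -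
      ∑ lam : Fin n → Fin L, (∏ j, B j (lam j)) * c lam| ≤ n * L * α := by
  classical
  have main : ∀ s : Finset (Fin n),
      |∑ lam : Fin n → Fin L, (∏ j, if j ∈ s then A j (lam j) else B j (lam j)) * c lam -
        ∑ lam : Fin n → Fin L, (∏ j, B j (lam j)) * c lam| ≤ s.card * L * α := by
    intro s
    induction s using Finset.induction with
    | empty => simp
    | @insert a s ha ih =>
      have step := tele_step A B hA0 hA1 hB0 hB1 α hα hd c hc0 hc1 a s ha
      calc |∑ lam : Fin n → Fin L,
            (∏ j, if j ∈ insert a s then A j (lam j) else B j (lam j)) * c lam -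
          ∑ lam : Fin n → Fin L, (∏ j, B j (lam j)) * c lam|
          ≤ |∑ lam : Fin n → Fin L,
              (∏ j, if j ∈ insert a s then A j (lam j) else B j (lam j)) * c lam -
            ∑ lam : Fin n → Fin L, (∏ j, if j ∈ s then A j (lam j) else B j (lam j)) * c lam|
            + |∑ lam : Fin n → Fin L, (∏ j, if j ∈ s then A j (lam j) else B j (lam j)) * c lam -
            ∑ lam : Fin n → Fin L, (∏ j, B j (lam j)) * c lam| := abs_sub_le _ _ _
        _ ≤ L * α + s.card * L * α := add_le_add step ih
        _ = (insert a s).card * L * α := by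
            rw [Finset.card_insert_of_notMem ha]
            push_cast
            ring
  have := main univ
  simpa using this

lemma condRank_nonneg {n L : ℕ} (lam : Fin n → Fin L) (i k : Fin n) :
    0 ≤ condRank lam i k := by
  unfold condRank; split
  · positivity
  · exact le_refl 0

lemma condRank_le_one {n L : ℕ} (lam : Fin n → Fin L) (i k : Fin n) :
    condRank lam i k ≤ 1 := by
  unfold condRank; split
  · have h1 : 1 ≤ nEQ lam (lam i) := by
      unfold nEQ
      rw [Nat.one_le_iff_ne_zero, Ne, Finset.card_eq_zero, ← Ne,
        ← Finset.nonempty_iff_ne_empty]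
      exact ⟨i, by simp⟩
    have : (1:ℝ) ≤ (nEQ lam (lam i) : ℝ) := by exact_mod_cast h1
    exact inv_le_one_of_one_le₀ this
  · exact zero_le_one

open scoped Classical in
lemma factor_step {X : Type*} [Fintype X] {n L : ℕ} (D : X → ℝ) (g : X → Fin L → ℝ)
    (S : Set X) (i k : Fin n) :
    ∑ xs : Fin n → X, (∏ j, D (xs j)) *
        (if xs i ∈ S then rUA (fun j => g (xs j)) i k else 0)
    = ∑ lam : Fin n → Fin L,
        (∏ j, (if j = i then (∑ x, D x * (if x ∈ S then g x (lam j) else 0))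
               else ∑ x, D x * g x (lam j))) * condRank lam i k := by
  have expand : ∀ xs : Fin n → X,
      (∏ j, D (xs j)) * (if xs i ∈ S then rUA (fun j => g (xs j)) i k else 0)
      = ∑ lam : Fin n → Fin L,
          (∏ j, (D (xs j) * g (xs j) (lam j) *
            (if j = i then (if xs j ∈ S then (1:ℝ) else 0) else 1))) * condRank lam i k := by
    intro xs
    by_cases hS : xs i ∈ S
    · rw [if_pos hS]
      unfold rUA
      rw [Finset.mul_sum]
      apply Finset.sum_congr rfl
      intro lam _
      rw [← mul_assoc]
      congr 1
      rw [Finset.prod_mul_distrib, Finset.prod_mul_distrib]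
      have : (∏ j, (if j = i then (if xs j ∈ S then (1:ℝ) else 0) else 1)) = 1 := by
        apply Finset.prod_eq_one
        intro j _
        by_cases hj : j = i
        · rw [if_pos hj, hj, if_pos hS]
        · rw [if_neg hj]
      rw [this, mul_one]
    · rw [if_neg hS, mul_zero]
      symm
      apply Finset.sum_eq_zero
      intro lam _
      have : (∏ j, (D (xs j) * g (xs j) (lam j) *
          (if j = i then (if xs j ∈ S then (1:ℝ) else 0) else 1))) = 0 := by
        apply Finset.prod_eq_zero (Finset.mem_univ i)
        rw [if_pos rfl, if_neg hS, mul_zero]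
      rw [this, zero_mul]
  calc ∑ xs : Fin n → X, (∏ j, D (xs j)) *
        (if xs i ∈ S then rUA (fun j => g (xs j)) i k else 0)
      = ∑ xs : Fin n → X, ∑ lam : Fin n → Fin L,
          (∏ j, (D (xs j) * g (xs j) (lam j) *
            (if j = i then (if xs j ∈ S then (1:ℝ) else 0) else 1))) * condRank lam i k :=
        Finset.sum_congr rfl fun xs _ => expand xs
    _ = ∑ lam : Fin n → Fin L, ∑ xs : Fin n → X,
          (∏ j, (D (xs j) * g (xs j) (lam j) *
            (if j = i then (if xs j ∈ S then (1:ℝ) else 0) else 1))) * condRank lam i k :=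
        Finset.sum_comm
    _ = ∑ lam : Fin n → Fin L,
        (∏ j, (if j = i then (∑ x, D x * (if x ∈ S then g x (lam j) else 0))
               else ∑ x, D x * g x (lam j))) * condRank lam i k := by
        apply Finset.sum_congr rfl
        intro lam _
        rw [← Finset.sum_mul]
        congr 1
        rw [← Fintype.prod_sum (fun j x => D x * g x (lam j) *
          (if j = i then (if x ∈ S then (1:ℝ) else 0) else 1))]
        apply Finset.prod_congr rfl
        intro j _
        by_cases hj : j = i
        · rw [if_pos hj]
          apply Finset.sum_congr rfl
          intro x _
          rw [if_pos hj]
          by_cases hx : x ∈ S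
          · rw [if_pos hx, if_pos hx, mul_one]
          · rw [if_neg hx, if_neg hx, mul_zero, mul_zero]
        · rw [if_neg hj]
          apply Finset.sum_congr rfl
          intro x _
          rw [if_neg hj, mul_one]

/-- If the predictor `f` is `(𝒞, α)`-multiaccurate with
respect to the ground truth `fstar` over a (finite) population `X` with
distribution `D`, and the whole population `Set.univ ∈ 𝒞`, then for every
group `S ∈ 𝒞` and every position `k`, the expected difference (over an i.i.d.
sample `x⃗ ∼ Dⁿ` and a uniform index `i`) between the UA rank-`k` probability
of `x_i` under the ground truth predictions and under `f`, restricted to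
`x_i ∈ S`, is at most `L · n · α`. -/
theorem rUA_multiaccuracy_composition
    {X : Type*} [Fintype X] (n L : ℕ) (hn : 1 ≤ n)
    (D : X → ℝ) (hD0 : ∀ x, 0 ≤ D x) (hD1 : ∑ x, D x = 1)
    (fstar f : X → Fin L → ℝ)
    (hfstar : ∀ x : X, (∀ ℓ, 0 ≤ fstar x ℓ) ∧ ∑ ℓ, fstar x ℓ = 1)
    (hf : ∀ x : X, (∀ ℓ, 0 ≤ f x ℓ) ∧ ∑ ℓ, f x ℓ = 1)
    (𝒞 : Set (Set X)) (hXC : Set.univ ∈ 𝒞) (α : ℝ)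
    (hMA : ∀ S ∈ 𝒞, ∀ ℓ : Fin L,
      |∑ x, D x * (if x ∈ S then fstar x ℓ - f x ℓ else 0)| ≤ α) :
    ∀ S ∈ 𝒞, ∀ k : Fin n,
      |∑ xs : Fin n → X, (∏ j, D (xs j)) *
          ((1 / (n : ℝ)) * ∑ i,
            (if xs i ∈ S then
              rUA (fun j => fstar (xs j)) i k - rUA (fun j => f (xs j)) i k
            else 0))|
        ≤ L * n * α := by
  intro S hS k
  -- Case L = 0 : everything vanishes.
  rcases Nat.eq_zero_or_pos L with hL0 | hLpos
  · subst hL0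
    have hz : ∀ xs : Fin n → X, ∀ i : Fin n,
        (if xs i ∈ S then
            rUA (fun j => fstar (xs j)) i k - rUA (fun j => f (xs j)) i k else 0) = 0 := by
      intro xs i
      have h1 : rUA (fun j => fstar (xs j)) i k = 0 := by
        unfold rUA
        apply Finset.sum_eq_zero
        intro lam _
        exact absurd (lam i).isLt (by omega)
      have h2 : rUA (fun j => f (xs j)) i k = 0 := by
        unfold rUA
        apply Finset.sum_eq_zero
        intro lam _
        exact absurd (lam i).isLt (by omega)
      rw [h1, h2, sub_self, ite_self]
    have : ∑ xs : Fin n → X, (∏ j, D (xs j)) *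
        ((1 / (n : ℝ)) * ∑ i,
          (if xs i ∈ S then
            rUA (fun j => fstar (xs j)) i k - rUA (fun j => f (xs j)) i k else 0)) = 0 := by
      apply Finset.sum_eq_zero
      intro xs _
      rw [Finset.sum_congr rfl fun i _ => hz xs i]
      simp
    rw [this]
    simp
  -- Main case L ≥ 1
  have hα : 0 ≤ α := le_trans (abs_nonneg _) (hMA Set.univ hXC ⟨0, hLpos⟩)
  -- the mean distributions
  set μs : Fin L → ℝ := fun ℓ => ∑ x, D x * fstar x ℓ with hμs
  set μf : Fin L → ℝ := fun ℓ => ∑ x, D x * f x ℓ with hμf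
  set νs : Fin L → ℝ := fun ℓ => ∑ x, D x * (if x ∈ S then fstar x ℓ else 0) with hνs
  set νf : Fin L → ℝ := fun ℓ => ∑ x, D x * (if x ∈ S then f x ℓ else 0) with hνf
  have hμs0 : ∀ ℓ, 0 ≤ μs ℓ := fun ℓ =>
    Finset.sum_nonneg fun x _ => mul_nonneg (hD0 x) ((hfstar x).1 ℓ)
  have hμf0 : ∀ ℓ, 0 ≤ μf ℓ := fun ℓ =>
    Finset.sum_nonneg fun x _ => mul_nonneg (hD0 x) ((hf x).1 ℓ)
  have hνs0 : ∀ ℓ, 0 ≤ νs ℓ := fun ℓ =>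
    Finset.sum_nonneg fun x _ => mul_nonneg (hD0 x)
      (by split; exacts [(hfstar x).1 ℓ, le_refl 0])
  have hνf0 : ∀ ℓ, 0 ≤ νf ℓ := fun ℓ =>
    Finset.sum_nonneg fun x _ => mul_nonneg (hD0 x)
      (by split; exacts [(hf x).1 ℓ, le_refl 0])
  have hμs1 : ∑ ℓ, μs ℓ ≤ 1 := by
    rw [hμs, Finset.sum_comm]
    calc ∑ x, ∑ ℓ, D x * fstar x ℓ = ∑ x, D x := by
          apply Finset.sum_congr rfl; intro x _
          rw [← Finset.mul_sum, (hfstar x).2, mul_one]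
      _ ≤ 1 := le_of_eq hD1
  have hμf1 : ∑ ℓ, μf ℓ ≤ 1 := by
    rw [hμf, Finset.sum_comm]
    calc ∑ x, ∑ ℓ, D x * f x ℓ = ∑ x, D x := by
          apply Finset.sum_congr rfl; intro x _
          rw [← Finset.mul_sum, (hf x).2, mul_one]
      _ ≤ 1 := le_of_eq hD1
  have hνs1 : ∑ ℓ, νs ℓ ≤ 1 := by
    rw [hνs, Finset.sum_comm]
    calc ∑ x, ∑ ℓ, D x * (if x ∈ S then fstar x ℓ else 0)
        ≤ ∑ x, D x := by
          apply Finset.sum_le_sum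
          intro x _
          rw [← Finset.mul_sum]
          by_cases hx : x ∈ S
          · simp only [if_pos hx]
            rw [(hfstar x).2, mul_one]
          · simp only [if_neg hx]
            simp [hD0 x]
      _ ≤ 1 := le_of_eq hD1
  have hνf1 : ∑ ℓ, νf ℓ ≤ 1 := by
    rw [hνf, Finset.sum_comm]
    calc ∑ x, ∑ ℓ, D x * (if x ∈ S then f x ℓ else 0)
        ≤ ∑ x, D x := by
          apply Finset.sum_le_sum
          intro x _
          rw [← Finset.mul_sum]
          by_cases hx : x ∈ S
          · simp only [if_pos hx]
            rw [(hf x).2, mul_one]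
          · simp only [if_neg hx]
            simp [hD0 x]
      _ ≤ 1 := le_of_eq hD1
  -- multiaccuracy bounds
  have hdν : ∀ ℓ, |νs ℓ - νf ℓ| ≤ α := by
    intro ℓ
    have := hMA S hS ℓ
    have e : ∑ x, D x * (if x ∈ S then fstar x ℓ - f x ℓ else 0)
        = νs ℓ - νf ℓ := by
      rw [hνs, hνf, ← Finset.sum_sub_distrib]
      apply Finset.sum_congr rfl
      intro x _
      rw [← mul_sub]
      congr 1
      by_cases hx : x ∈ S <;> simp [hx]
    rwa [e] at this
  have hdμ : ∀ ℓ, |μs ℓ - μf ℓ| ≤ α := by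
    intro ℓ
    have h0 := hMA Set.univ hXC ℓ
    simp only [Set.mem_univ, if_true] at h0
    have e : μs ℓ - μf ℓ = ∑ x, D x * (fstar x ℓ - f x ℓ) := by
      rw [hμs, hμf, ← Finset.sum_sub_distrib]
      apply Finset.sum_congr rfl
      intro x _
      rw [← mul_sub]
    rw [e]
    exact h0
  -- per-index bound
  have perI : ∀ i : Fin n,
      |∑ xs : Fin n → X, (∏ j, D (xs j)) *
          (if xs i ∈ S then rUA (fun j => fstar (xs j)) i k else 0) -
        ∑ xs : Fin n → X, (∏ j, D (xs j)) *
          (if xs i ∈ S then rUA (fun j => f (xs j)) i k else 0)| ≤ n * L * α := by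
    intro i
    rw [factor_step D fstar S i k, factor_step D f S i k]
    exact tele (fun j ℓ => if j = i then νs ℓ else μs ℓ)
      (fun j ℓ => if j = i then νf ℓ else μf ℓ)
      (fun j ℓ => by split; exacts [hνs0 ℓ, hμs0 ℓ])
      (fun j => by
        by_cases h : j = i
        · simp only [if_pos h]; exact hνs1
        · simp only [if_neg h]; exact hμs1)
      (fun j ℓ => by split; exacts [hνf0 ℓ, hμf0 ℓ])
      (fun j => by
        by_cases h : j = i
        · simp only [if_pos h]; exact hνf1
        · simp only [if_neg h]; exact hμf1)
      α hα
      (fun j ℓ => by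
        by_cases h : j = i
        · simp only [if_pos h]; exact hdν ℓ
        · simp only [if_neg h]; exact hdμ ℓ)
      (fun lam => condRank lam i k)
      (fun lam => condRank_nonneg lam i k)
      (fun lam => condRank_le_one lam i k)
  -- rearrange the main sum
  have rearr : ∑ xs : Fin n → X, (∏ j, D (xs j)) *
        ((1 / (n : ℝ)) * ∑ i,
          (if xs i ∈ S then
            rUA (fun j => fstar (xs j)) i k - rUA (fun j => f (xs j)) i k else 0))
      = (1 / (n : ℝ)) * ∑ i,
          (∑ xs : Fin n → X, (∏ j, D (xs j)) *
              (if xs i ∈ S then rUA (fun j => fstar (xs j)) i k else 0) -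
            ∑ xs : Fin n → X, (∏ j, D (xs j)) *
              (if xs i ∈ S then rUA (fun j => f (xs j)) i k else 0)) := by
    have e1 : ∀ xs : Fin n → X, (∏ j, D (xs j)) *
        ((1 / (n : ℝ)) * ∑ i,
          (if xs i ∈ S then
            rUA (fun j => fstar (xs j)) i k - rUA (fun j => f (xs j)) i k else 0))
        = (1 / (n : ℝ)) * ∑ i, ((∏ j, D (xs j)) *
            (if xs i ∈ S then rUA (fun j => fstar (xs j)) i k else 0) -
          (∏ j, D (xs j)) *
            (if xs i ∈ S then rUA (fun j => f (xs j)) i k else 0)) := by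
      intro xs
      rw [← mul_assoc, mul_comm (∏ j, D (xs j)) (1 / (n:ℝ)), mul_assoc,
        Finset.mul_sum]
      congr 1
      apply Finset.sum_congr rfl
      intro i _
      by_cases hx : xs i ∈ S
      · simp only [if_pos hx]
        ring
      · simp only [if_neg hx]
        ring
    rw [Finset.sum_congr rfl fun xs _ => e1 xs, ← Finset.mul_sum,
      Finset.sum_comm]
    congr 1
    apply Finset.sum_congr rfl
    intro i _
    rw [← Finset.sum_sub_distrib]
  rw [rearr]
  have hnpos : (0:ℝ) < n := by exact_mod_cast hn
  calc |(1 / (n : ℝ)) * ∑ i, _|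
      = (1 / (n : ℝ)) * |∑ i : Fin n,
          (∑ xs : Fin n → X, (∏ j, D (xs j)) *
              (if xs i ∈ S then rUA (fun j => fstar (xs j)) i k else 0) -
            ∑ xs : Fin n → X, (∏ j, D (xs j)) *
              (if xs i ∈ S then rUA (fun j => f (xs j)) i k else 0))| := by
        rw [abs_mul, abs_of_nonneg (by positivity : (0:ℝ) ≤ 1 / (n:ℝ))]
    _ ≤ (1 / (n : ℝ)) * ∑ i : Fin n, (n * L * α : ℝ) := by
        apply mul_le_mul_of_nonneg_left _ (by positivity)
        exact le_trans (Finset.abs_sum_le_sum_abs _ _)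
          (Finset.sum_le_sum fun i _ => perI i)
    _ = L * n * α := by
        rw [Finset.sum_const, Finset.card_univ, Fintype.card_fin, nsmul_eq_mul,
          ← mul_assoc, one_div, inv_mul_cancel₀ hnpos.ne', one_mul]
        ring
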